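/- Let Λ be an admissible graph and define u_{[−Λ,J]} : H_J → H_{I∪L} by (u_{[−Λ,J]}ψ)(q^{IL}) = d^{-|J|/2} Σ_{q^J∈F^J} conj(τ(Λ,q^{IJL})) ψ(q^J). Then u_{[−Λ,J]} is unitary, and for every q^L ∈ F^L there exists a complex number λ of modulus one such that Φ_L^* ∘ F_L^* ∘ x_L(q^L)^* ∘ u_{[−Λ,J]} = λ · v_{[Λ,q^L]}^* as operators H_J → H_I. -/

import Mathlib

open scoped BigOperators

noncomputable section

/-- The Hilbert space `H_K` of complex functions on the configurations `F^K`. -/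
abbrev HS (F K : Type*) : Type _ := (K → F) → ℂ

/-- The linear map on function spaces given by an integral kernel. -/
def kernelMap {α β : Type*} [Fintype α] (k : β → α → ℂ) : (α → ℂ) →ₗ[ℂ] (β → ℂ) where
  toFun ψ := fun b => ∑ a, k b a * ψ a
  map_add' ψ φ := by
    funext b
    simp only [Pi.add_apply, mul_add, Finset.sum_add_distrib]
  map_smul' c ψ := by
    funext b
    simp only [Pi.smul_apply, smul_eq_mul, RingHom.id_apply, Finset.mul_sum]
    exact Finset.sum_congr rfl fun _ _ => by ring

/-- The operator of multiplication by a fixed function. -/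
def mulFun {α : Type*} (f : α → ℂ) : (α → ℂ) →ₗ[ℂ] (α → ℂ) where
  toFun ψ := fun a => f a * ψ a
  map_add' ψ φ := by funext a; simp [mul_add]
  map_smul' c ψ := by funext a; simp; ring

/-- The pullback (precomposition) operator along a map of configuration spaces. -/
def compMap {α β : Type*} (σ : β → α) : (α → ℂ) →ₗ[ℂ] (β → ℂ) where
  toFun ψ := fun b => ψ (σ b)
  map_add' _ _ := rfl
  map_smul' _ _ := rfl

variable {F : Type*} [Field F] [Fintype F] [DecidableEq F]

/-- `ε` is an injective character of the additive group of `F` into the unit circle. -/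
def IsCharacter (ε : F → ℂ) : Prop :=
  Function.Injective ε ∧ (∀ a, ‖ε a‖ = 1) ∧ ∀ a b, ε (a + b) = ε a * ε b

/-- The symmetric bicharacter `χ(p,q) = Π_k ε(p_k q_k)`. -/
def chi (ε : F → ℂ) {K : Type*} [Fintype K] (p q : K → F) : ℂ := ∏ k, ε (p k * q k)

/-- The shift operator `x(q)`, `(x(q)ψ)(q₁) = ψ(q₁ - q)`. -/
def shiftOp {K : Type*} (q : K → F) : HS F K →ₗ[ℂ] HS F K :=
  compMap (fun q₁ => q₁ - q)

/-- The multiplier operator `z(p)`, `(z(p)ψ)(q₁) = χ(p,q₁)ψ(q₁)`. -/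
def multOp (ε : F → ℂ) {K : Type*} [Fintype K] (p : K → F) : HS F K →ₗ[ℂ] HS F K :=
  mulFun (chi ε p)

/-- The Weyl operator `w(ξ) = z(p)x(q)` of the phase space point `ξ = (p,q)`. -/
def weylOp (ε : F → ℂ) {K : Type*} [Fintype K] (ξ : (K → F) × (K → F)) :
    HS F K →ₗ[ℂ] HS F K :=
  multOp ε ξ.1 ∘ₗ shiftOp ξ.2

/-- The normalization constant `d^(-n/2)` (where `d = |F|`) as a complex number. -/
def rnorm (F : Type*) [Fintype F] (n : ℕ) : ℂ :=
  (((Fintype.card F : ℝ) ^ (-(n : ℝ) / 2) : ℝ) : ℂ)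

/-- The Haar-normalized inner product on `H_K`:
`⟨ψ,φ⟩ = d^(-|K|) Σ_q conj(ψ q) φ q`. -/
def hinner {K : Type*} [Fintype K] [DecidableEq K] (ψ φ : HS F K) : ℂ :=
  ((Fintype.card F : ℂ) ^ (Fintype.card K))⁻¹ *
    ∑ q : K → F, (starRingEnd ℂ) (ψ q) * φ q

/-- The delta-function basis vector located at `q`. -/
def deltaV {K : Type*} [Fintype K] [DecidableEq K] (q : K → F) : HS F K :=
  fun q' => if q' = q then 1 else 0

/-- The adjoint of an operator with respect to the Haar-normalized inner
products `hinner` on source and target. -/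
def hAdj {K M : Type*} [Fintype K] [Fintype M] [DecidableEq K] [DecidableEq M]
    (A : HS F K →ₗ[ℂ] HS F M) : HS F M →ₗ[ℂ] HS F K :=
  kernelMap (fun qK qM =>
    (Fintype.card F : ℂ) ^ (Fintype.card K) * ((Fintype.card F : ℂ) ^ (Fintype.card M))⁻¹ *
      (starRingEnd ℂ) (A (deltaV qK) qM))

variable {I J L : Type*} [Fintype I] [Fintype J] [Fintype L]
  [DecidableEq I] [DecidableEq J] [DecidableEq L]

/-- Combining configurations on `I`, `J`, `L` into one on `I ⊕ J ⊕ L`. -/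
def combine (qI : I → F) (qJ : J → F) (qL : L → F) : (I ⊕ J ⊕ L) → F :=
  Sum.elim qI (Sum.elim qJ qL)

/-- Inclusion of the input vertices. -/
def inI : I → I ⊕ J ⊕ L := Sum.inl
/-- Inclusion of the output vertices. -/
def inJ : J → I ⊕ J ⊕ L := fun j => Sum.inr (Sum.inl j)
/-- Inclusion of the syndrome vertices. -/
def inL : L → I ⊕ J ⊕ L := fun l => Sum.inr (Sum.inr l)
/-- Inclusion of the input and syndrome vertices. -/
def embIL : I ⊕ L → I ⊕ J ⊕ L := Sum.elim inI inL

/-- The `J`-rows of `Λ` applied to a full configuration (`Λ^J_{IJL} q^{IJL}`). -/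
def appJ (Λ : Matrix (I ⊕ J ⊕ L) (I ⊕ J ⊕ L) F) (v : (I ⊕ J ⊕ L) → F) : J → F :=
  fun j => Λ.mulVec v (inJ j)

/-- The `I`-rows of `Λ` applied to a full configuration (`Λ^I_{IJL} q^{IJL}`). -/
def appI (Λ : Matrix (I ⊕ J ⊕ L) (I ⊕ J ⊕ L) F) (v : (I ⊕ J ⊕ L) → F) : I → F :=
  fun i => Λ.mulVec v (inI i)

/-- The block `Λ^J_{IL}` (rows in `J`, columns in `I ∪ L`). -/
def blockJIL (Λ : Matrix (I ⊕ J ⊕ L) (I ⊕ J ⊕ L) F) : Matrix J (I ⊕ L) F :=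
  fun j il => Λ (inJ j) (embIL il)

/-- A weighted graph (adjacency matrix) is admissible: it is symmetric, the block
`Λ^J_{IL}` is invertible and the block `Λ^{IL}_{IL}` vanishes. -/
def Admissible (Λ : Matrix (I ⊕ J ⊕ L) (I ⊕ J ⊕ L) F) : Prop :=
  Λ.IsSymm ∧ (∃ B : Matrix (I ⊕ L) J F, blockJIL Λ * B = 1 ∧ B * blockJIL Λ = 1) ∧
    ∀ a b : I ⊕ L, Λ (embIL a) (embIL b) = 0

/-- `τ(Λ,·)` is a family of unimodular phases forming a one-dimensional projective
representation: `τ(q₁+q₂) = τ(q₁)τ(q₂)χ(Λq₁,q₂)`. -/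
def IsTau (ε : F → ℂ) (Λ : Matrix (I ⊕ J ⊕ L) (I ⊕ J ⊕ L) F)
    (tau : ((I ⊕ J ⊕ L) → F) → ℂ) : Prop :=
  (∀ q, ‖tau q‖ = 1) ∧
    ∀ q₁ q₂, tau (q₁ + q₂) = tau q₁ * tau q₂ * chi ε (Λ.mulVec q₁) q₂

/-- The graph code operator `v_{[Λ,q^L]} : H_I → H_J`,
`(v ψ)(q^J) = d^(-|I|/2) Σ_{q^I} τ(Λ, q^{IJL}) ψ(q^I)`. -/
def gcode (tau : ((I ⊕ J ⊕ L) → F) → ℂ) (qL : L → F) : HS F I →ₗ[ℂ] HS F J :=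
  kernelMap (fun qJ qI => rnorm F (Fintype.card I) * tau (combine qI qJ qL))

/-- The syndrome-table condition `γ_Λ(ξ^J, q^L, ξ^I) = 0`:
`p^J = Λ^J_{IJL} q^{IJL}` and `p^I = Λ^I_J q^J`. -/
def GammaZero (Λ : Matrix (I ⊕ J ⊕ L) (I ⊕ J ⊕ L) F)
    (pJ qJ : J → F) (qL : L → F) (pI qI : I → F) : Prop :=
  pJ = appJ Λ (combine qI qJ qL) ∧ pI = appI Λ (combine 0 qJ 0)

/-- The weight of a phase space vector `ξ^J = (p^J,q^J)`. -/
def wt {J : Type*} [Fintype J] (pJ qJ : J → F) : ℕ :=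
  (Finset.univ.filter fun j => ¬(pJ j = 0 ∧ qJ j = 0)).card

/-- `Λ` is associated with a `t`-error correcting code: for every set `E ⊆ J` with
at most `2t` elements, `Λ^{J∖E}_{IE} q^{IE} = 0` implies `q^I = 0` and
`Λ^I_E q^E = 0`. -/
def TCode (Λ : Matrix (I ⊕ J ⊕ L) (I ⊕ J ⊕ L) F) (t : ℕ) : Prop :=
  ∀ E : Finset J, E.card ≤ 2 * t → ∀ (qI : I → F) (qJ : J → F),
    (∀ j ∉ E, qJ j = 0) →
    (∀ j ∉ E, appJ Λ (combine qI qJ 0) j = 0) →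
    qI = 0 ∧ appI Λ (combine 0 qJ 0) = 0

/-- Tensoring with the standard (shift invariant) vector `Ω_K ≡ 1`:
the isometry `Φ_K : H_M → H_{M⊕K}`, `(Φψ)(q) = ψ(q∘inl)`. -/
def tensOmega {M K : Type*} : HS F M →ₗ[ℂ] HS F (M ⊕ K) :=
  compMap (fun q => q ∘ Sum.inl)

/-- The Fourier transform acting on the `K`-factor of `H_{M⊕K}`. -/
def fourierR (ε : F → ℂ) {M K : Type*} [Fintype K] [DecidableEq K] :
    HS F (M ⊕ K) →ₗ[ℂ] HS F (M ⊕ K) where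
  toFun φ := fun q => ∑ qK' : K → F,
    rnorm F (Fintype.card K) * chi ε (q ∘ Sum.inr) qK' * φ (Sum.elim (q ∘ Sum.inl) qK')
  map_add' φ₁ φ₂ := by
    funext q
    simp only [Pi.add_apply, mul_add, Finset.sum_add_distrib]
  map_smul' c φ := by
    funext q
    simp only [Pi.smul_apply, smul_eq_mul, RingHom.id_apply, Finset.mul_sum]
    exact Finset.sum_congr rfl fun _ _ => by ring

/-- The multiplier `z(p)` acting on the `K`-factor of `H_{M⊕K}`. -/
def zR (ε : F → ℂ) {M K : Type*} [Fintype K] (p : K → F) :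
    HS F (M ⊕ K) →ₗ[ℂ] HS F (M ⊕ K) :=
  mulFun (fun q => chi ε p (q ∘ Sum.inr))

/-- The selected error `ξ^I_{[q^L]}`: the unique `ξ^I` such that
`γ_Λ(ξ^J, q^L, ξ^I) = 0` for some `ξ^J` of weight at most `t`, if such exists,
and `(0,0)` otherwise. -/
def xiSel (Λ : Matrix (I ⊕ J ⊕ L) (I ⊕ J ⊕ L) F) (t : ℕ) (qL : L → F) :
    (I → F) × (I → F) :=
  @dite _ (∃ ξI : (I → F) × (I → F), ∃ pJ qJ : J → F,
      wt pJ qJ ≤ t ∧ GammaZero Λ pJ qJ qL ξI.1 ξI.2)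
    (Classical.dec _) (fun h => h.choose) (fun _ => (0, 0))
/-- The operator `u_{[-Λ,J]} : H_J → H_{I∪L}`,
`(u ψ)(q^{IL}) = d^(-|J|/2) Σ_{q^J} conj(τ(Λ,q^{IJL})) ψ(q^J)`. -/
def uMinusOp {F : Type*} [Field F] [Fintype F] [DecidableEq F]
    {I J L : Type*} [Fintype I] [Fintype J] [Fintype L]
    [DecidableEq I] [DecidableEq J] [DecidableEq L]
    (tau : ((I ⊕ J ⊕ L) → F) → ℂ) : HS F J →ₗ[ℂ] HS F (I ⊕ L) :=
  kernelMap (fun qIL qJ => rnorm F (Fintype.card J) *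
    (starRingEnd ℂ) (tau (combine (qIL ∘ Sum.inl) qJ (qIL ∘ Sum.inr))))

set_option linter.unusedSectionVars false
section Helpers

variable {F : Type*} [Field F] [Fintype F] [DecidableEq F] {ε : F → ℂ}

lemma eps_zero (hε : IsCharacter ε) : ε 0 = 1 := by
  have h := hε.2.2 0 0
  simp only [add_zero] at h
  have h0 : ε 0 ≠ 0 := by
    intro h'; have := hε.2.1 0; rw [h'] at this; simp at this
  field_simp at h
  exact h.symm

lemma eps_conj (hε : IsCharacter ε) (a : F) : (starRingEnd ℂ) (ε a) = ε (-a) := by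
  have h : ε a * ε (-a) = 1 := by rw [← hε.2.2, add_neg_cancel, eps_zero hε]
  have habs : (starRingEnd ℂ) (ε a) * ε a = 1 := by
    have := Complex.normSq_eq_norm_sq (ε a)
    rw [hε.2.1 a] at this
    rw [← Complex.normSq_eq_conj_mul_self, this]; norm_num
  calc (starRingEnd ℂ) (ε a) = (starRingEnd ℂ) (ε a) * (ε a * ε (-a)) := by rw [h, mul_one]
    _ = ε (-a) := by rw [← mul_assoc, habs, one_mul]

lemma sum_eps (hε : IsCharacter ε) {a : F} (ha : a ≠ 0) : ∑ x : F, ε (a * x) = 0 := by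
  have hbij : Function.Bijective (fun x : F => a * x) :=
    (mulLeft_bijective₀ a ha)
  rw [Function.Bijective.sum_comp hbij ε]
  -- ∑ y, ε y = 0
  obtain ⟨b, hb⟩ : ∃ b : F, ε b ≠ 1 := by
    obtain ⟨b, hb0⟩ : ∃ b : F, b ≠ 0 := ⟨1, one_ne_zero⟩
    exact ⟨b, fun h => hb0 (hε.1 (h.trans (eps_zero hε).symm))⟩
  have key : ε b * ∑ y : F, ε y = ∑ y : F, ε y := by
    rw [Finset.mul_sum]
    rw [← Equiv.sum_comp (Equiv.addLeft b) ε]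
    exact Finset.sum_congr rfl fun y _ => (hε.2.2 b y).symm
  have := sub_eq_zero.mpr key
  rw [← sub_one_mul] at this
  rcases mul_eq_zero.mp this with h | h
  · exact absurd (by linear_combination h) hb
  · exact h

end Helpers
set_option linter.unusedSectionVars false

section ChiHelpers

variable {F : Type*} [Field F] [Fintype F] [DecidableEq F] {ε : F → ℂ}
variable {K : Type*} [Fintype K] [DecidableEq K]

lemma chi_zero_right (hε : IsCharacter ε) (p : K → F) : chi ε p 0 = 1 := by
  unfold chi; simp [eps_zero hε]

lemma chi_zero_left (hε : IsCharacter ε) (q : K → F) : chi ε (0:K→F) q = 1 := by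
  unfold chi; simp [eps_zero hε]

lemma chi_add_left (hε : IsCharacter ε) (p p' q : K → F) :
    chi ε (p + p') q = chi ε p q * chi ε p' q := by
  unfold chi
  rw [← Finset.prod_mul_distrib]
  exact Finset.prod_congr rfl fun k _ => by rw [Pi.add_apply, add_mul, hε.2.2]

lemma chi_add_right (hε : IsCharacter ε) (p q q' : K → F) :
    chi ε p (q + q') = chi ε p q * chi ε p q' := by
  unfold chi
  rw [← Finset.prod_mul_distrib]
  exact Finset.prod_congr rfl fun k _ => by rw [Pi.add_apply, mul_add, hε.2.2]

lemma chi_conj (hε : IsCharacter ε) (p q : K → F) :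
    (starRingEnd ℂ) (chi ε p q) = chi ε (-p) q := by
  unfold chi
  rw [map_prod]
  exact Finset.prod_congr rfl fun k _ => by rw [eps_conj hε, Pi.neg_apply, neg_mul]

/-- orthogonality -/
lemma sum_chi (hε : IsCharacter ε) (p : K → F) :
    ∑ q : K → F, chi ε p q =
      if p = 0 then ((Fintype.card F : ℂ) ^ (Fintype.card K)) else 0 := by
  unfold chi
  rw [← Fintype.piFinset_univ,
    ← Finset.prod_univ_sum (t := fun _ : K => (Finset.univ : Finset F)) (f := fun k v => ε (p k * v))]
  by_cases hp : p = 0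
  · simp [hp, eps_zero hε, Finset.card_univ]
  · rw [if_neg hp]
    obtain ⟨k0, hk0⟩ : ∃ k, p k ≠ 0 := by
      by_contra h; push_neg at h; exact hp (funext h)
    exact Finset.prod_eq_zero (Finset.mem_univ k0) (sum_eps hε hk0)

end ChiHelpers
section TauHelpers

lemma conj_mul_self_of_abs_one {z : ℂ} (h : ‖z‖ = 1) :
    (starRingEnd ℂ) z * z = 1 := by
  rw [← Complex.normSq_eq_conj_mul_self, Complex.normSq_eq_norm_sq, h]; norm_num

variable {F : Type*} [Field F] [Fintype F] [DecidableEq F] {ε : F → ℂ}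
variable {I J L : Type*} [Fintype I] [Fintype J] [Fintype L]
  [DecidableEq I] [DecidableEq J] [DecidableEq L]
variable {Λ : Matrix (I ⊕ J ⊕ L) (I ⊕ J ⊕ L) F} {tau : ((I ⊕ J ⊕ L) → F) → ℂ}

lemma tau_zero (hε : IsCharacter ε) (htau : IsTau ε Λ tau) : tau 0 = 1 := by
  have h := htau.2 0 0
  simp only [add_zero, Matrix.mulVec_zero] at h
  rw [chi_zero_left hε, mul_one] at h
  have h0 : tau 0 ≠ 0 := by
    intro h'; have := htau.1 0; rw [h'] at this; simp at this
  field_simp at h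
  exact h.symm

lemma tau_mul_conj (hε : IsCharacter ε) (htau : IsTau ε Λ tau)
    (a b : (I ⊕ J ⊕ L) → F) :
    tau a * (starRingEnd ℂ) (tau b) =
      tau (a - b) * chi ε (Λ.mulVec b) (a - b) := by
  have h := htau.2 b (a - b)
  rw [add_sub_cancel] at h
  rw [h]
  have h1 : (starRingEnd ℂ) (tau b) * tau b = 1 := conj_mul_self_of_abs_one (htau.1 b)
  linear_combination (tau (a - b) * chi ε (Λ.mulVec b) (a - b)) * h1

end TauHelpers

section RnormHelpers

variable (F : Type*) [Fintype F] [Nonempty F]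

lemma cardF_pos : (0:ℝ) < (Fintype.card F : ℝ) := by
  exact_mod_cast Fintype.card_pos

lemma rnorm_conj (n : ℕ) : (starRingEnd ℂ) (rnorm F n) = rnorm F n :=
  Complex.conj_ofReal _

lemma rnorm_mul (m n : ℕ) : rnorm F m * rnorm F n = rnorm F (m + n) := by
  unfold rnorm
  rw [← Complex.ofReal_mul, ← Real.rpow_add (cardF_pos F)]
  norm_num
  ring_nf

lemma rnorm_two (n : ℕ) : rnorm F (2 * n) = ((Fintype.card F : ℂ) ^ n)⁻¹ := by
  unfold rnorm
  have : (-(((2*n : ℕ)) : ℝ) / 2) = -(n:ℝ) := by push_cast; ring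
  rw [this, Real.rpow_neg (cardF_pos F).le, Real.rpow_natCast]
  push_cast
  ring

end RnormHelpers

section CombineHelpers

variable {F : Type*} [Field F] [Fintype F] [DecidableEq F] {ε : F → ℂ}
variable {I J L : Type*} [Fintype I] [Fintype J] [Fintype L]
  [DecidableEq I] [DecidableEq J] [DecidableEq L]

lemma combine_add (qI qI' : I → F) (qJ qJ' : J → F) (qL qL' : L → F) :
    combine qI qJ qL + combine qI' qJ' qL' =
      combine (F := F) (qI + qI') (qJ + qJ') (qL + qL') := by
  funext v
  rcases v with i | j | l <;> rfl

lemma combine_sub (qI qI' : I → F) (qJ qJ' : J → F) (qL qL' : L → F) :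
    combine qI qJ qL - combine qI' qJ' qL' =
      combine (F := F) (qI - qI') (qJ - qJ') (qL - qL') := by
  funext v
  rcases v with i | j | l <;> rfl

lemma combine_zero : combine (F := F) (0 : I → F) (0 : J → F) (0 : L → F) = 0 := by
  funext v; rcases v with i | j | l <;> rfl

lemma chi_combine_midd (hε : IsCharacter ε) (p : (I ⊕ J ⊕ L) → F) (qJ : J → F) :
    chi ε p (combine 0 qJ 0) = chi ε (fun j => p (inJ j)) qJ := by
  unfold chi
  rw [Fintype.prod_sum_type, Fintype.prod_sum_type]
  simp [combine, inJ, eps_zero hε]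

lemma chi_combine_right (hε : IsCharacter ε) (p : (I ⊕ J ⊕ L) → F) (qL : L → F) :
    chi ε p (combine 0 0 qL) = chi ε (fun l => p (inL l)) qL := by
  unfold chi
  rw [Fintype.prod_sum_type, Fintype.prod_sum_type]
  simp [combine, inL, eps_zero hε]

lemma mulVec_combine (Λ : Matrix (I ⊕ J ⊕ L) (I ⊕ J ⊕ L) F)
    (qI : I → F) (qJ : J → F) (qL : L → F) (v : I ⊕ J ⊕ L) :
    Λ.mulVec (combine qI qJ qL) v =
      (∑ i, Λ v (inI i) * qI i) + (∑ j, Λ v (inJ j) * qJ j) + (∑ l, Λ v (inL l) * qL l) := by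
  unfold Matrix.mulVec dotProduct
  rw [Fintype.sum_sum_type, Fintype.sum_sum_type]
  simp [combine, inI, inJ, inL, add_assoc]

end CombineHelpers
section SwapHelpers
open Matrix

variable {F : Type*} [Field F] [Fintype F] [DecidableEq F] {ε : F → ℂ}

lemma eps_sum (hε : IsCharacter ε) {α : Type*} (s : Finset α) (f : α → F) :
    ε (∑ i ∈ s, f i) = ∏ i ∈ s, ε (f i) := by
  classical
  induction s using Finset.cons_induction with
  | empty => simp [eps_zero hε]
  | cons a s ha ih => rw [Finset.sum_cons, Finset.prod_cons, hε.2.2, ih]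

lemma chi_eq_eps_sum (hε : IsCharacter ε) {K : Type*} [Fintype K] (p q : K → F) :
    chi ε p q = ε (∑ k, p k * q k) := (eps_sum hε _ _).symm

lemma chi_mulVec_swap (hε : IsCharacter ε) {m n : Type*} [Fintype m] [Fintype n]
    (M : Matrix m n F) (x : n → F) (y : m → F) :
    chi ε (M.mulVec x) y = chi ε (Mᵀ.mulVec y) x := by
  rw [chi_eq_eps_sum hε, chi_eq_eps_sum hε]
  congr 1
  unfold Matrix.mulVec dotProduct Matrix.transpose
  simp only [Matrix.of_apply, Finset.sum_mul]
  rw [Finset.sum_comm]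
  exact Finset.sum_congr rfl fun j _ => Finset.sum_congr rfl fun i _ => by ring

lemma kernelMap_apply {α β : Type*} [Fintype α] (k : β → α → ℂ) (ψ : α → ℂ) (b : β) :
    kernelMap k ψ b = ∑ a, k b a * ψ a := rfl

end SwapHelpers

section Part1
open Matrix

variable {F : Type*} [Field F] [Fintype F] [DecidableEq F] {ε : F → ℂ}
variable {I J L : Type*} [Fintype I] [Fintype J] [Fintype L]
  [DecidableEq I] [DecidableEq J] [DecidableEq L]
variable {Λ : Matrix (I ⊕ J ⊕ L) (I ⊕ J ⊕ L) F} {tau : ((I ⊕ J ⊕ L) → F) → ℂ}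

lemma key_sum (hε : IsCharacter ε) (hΛ : Admissible Λ) (htau : IsTau ε Λ tau)
    (qJ qJ' : J → F) :
    ∑ qIL : (I ⊕ L) → F,
      tau (combine (qIL ∘ Sum.inl) qJ (qIL ∘ Sum.inr)) *
        (starRingEnd ℂ) (tau (combine (qIL ∘ Sum.inl) qJ' (qIL ∘ Sum.inr))) =
      if qJ' = qJ then ((Fintype.card F : ℂ) ^ (Fintype.card (I ⊕ L))) else 0 := by
  obtain ⟨-, ⟨B, hAB, hBA⟩, -⟩ := hΛ
  set Δ : J → F := qJ - qJ' with hΔ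
  set g : J → F := fun j => ∑ j', Λ (inJ j) (inJ j') * qJ' j' with hg
  have hterm : ∀ qIL : (I ⊕ L) → F,
      tau (combine (qIL ∘ Sum.inl) qJ (qIL ∘ Sum.inr)) *
        (starRingEnd ℂ) (tau (combine (qIL ∘ Sum.inl) qJ' (qIL ∘ Sum.inr))) =
        (tau (combine 0 Δ 0) * chi ε g Δ) *
          chi ε ((blockJIL Λ)ᵀ.mulVec Δ) qIL := by
    intro qIL
    rw [tau_mul_conj hε htau]
    have hab : combine (qIL ∘ Sum.inl) qJ (qIL ∘ Sum.inr) -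
        combine (qIL ∘ Sum.inl) qJ' (qIL ∘ Sum.inr) = combine 0 Δ 0 := by
      rw [combine_sub, sub_self, sub_self]
    rw [hab, chi_combine_midd hε]
    have hJrow : (fun j => Λ.mulVec (combine (qIL ∘ Sum.inl) qJ' (qIL ∘ Sum.inr)) (inJ j)) =
        (blockJIL Λ).mulVec qIL + g := by
      funext j
      rw [mulVec_combine]
      simp only [Pi.add_apply, hg]
      unfold Matrix.mulVec dotProduct blockJIL
      rw [Fintype.sum_sum_type]
      simp only [embIL, Sum.elim_inl, Sum.elim_inr, Function.comp_apply]
      ring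
    rw [hJrow, chi_add_left hε, ← chi_mulVec_swap hε]
    ring
  simp only [hterm]
  rw [← Finset.mul_sum, sum_chi hε]
  have hiff : ((blockJIL Λ)ᵀ.mulVec Δ = 0) ↔ qJ' = qJ := by
    constructor
    · intro h
      have h2 := congrArg (fun v => Bᵀ.mulVec v) h
      simp only [Matrix.mulVec_mulVec, Matrix.mulVec_zero, ← Matrix.transpose_mul] at h2
      rw [hAB, Matrix.transpose_one, Matrix.one_mulVec] at h2
      rw [hΔ] at h2
      exact (sub_eq_zero.mp h2).symm
    · intro h
      rw [hΔ, h, sub_self]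
      exact Matrix.mulVec_zero _
  by_cases h : qJ' = qJ
  · rw [if_pos (hiff.mpr h), if_pos h]
    have hΔ0 : Δ = 0 := by rw [hΔ, h, sub_self]
    rw [hΔ0, combine_zero, tau_zero hε htau, chi_zero_right hε]
    ring
  · rw [if_neg (fun hh => h (hiff.mp hh)), if_neg h, mul_zero]

lemma uMinus_isometry (hε : IsCharacter ε) (hΛ : Admissible Λ) (htau : IsTau ε Λ tau)
    (ψ φ : HS F J) :
    hinner (uMinusOp (I := I) (L := L) tau ψ) (uMinusOp tau φ) = hinner ψ φ := by
  classical
  unfold hinner uMinusOp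
  simp only [kernelMap_apply, map_sum, _root_.map_mul, rnorm_conj, Complex.conj_conj]
  have expand : ∀ x : (I ⊕ L) → F,
      ((∑ qJ : J → F, rnorm F (Fintype.card J) *
          tau (combine (x ∘ Sum.inl) qJ (x ∘ Sum.inr)) * (starRingEnd ℂ) (ψ qJ)) *
        ∑ qJ' : J → F, rnorm F (Fintype.card J) *
          (starRingEnd ℂ) (tau (combine (x ∘ Sum.inl) qJ' (x ∘ Sum.inr))) * φ qJ') =
      ∑ qJ : J → F, ∑ qJ' : J → F,
        (rnorm F (Fintype.card J) * rnorm F (Fintype.card J) *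
            (starRingEnd ℂ) (ψ qJ) * φ qJ') *
          (tau (combine (x ∘ Sum.inl) qJ (x ∘ Sum.inr)) *
            (starRingEnd ℂ) (tau (combine (x ∘ Sum.inl) qJ' (x ∘ Sum.inr)))) := by
    intro x
    rw [Finset.sum_mul_sum]
    exact Finset.sum_congr rfl fun qJ _ => Finset.sum_congr rfl fun qJ' _ => by ring
  simp only [expand]
  rw [Finset.sum_comm]
  have swap2 : ∀ qJ : J → F,
      (∑ x : (I ⊕ L) → F, ∑ qJ' : J → F,
        (rnorm F (Fintype.card J) * rnorm F (Fintype.card J) *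
            (starRingEnd ℂ) (ψ qJ) * φ qJ') *
          (tau (combine (x ∘ Sum.inl) qJ (x ∘ Sum.inr)) *
            (starRingEnd ℂ) (tau (combine (x ∘ Sum.inl) qJ' (x ∘ Sum.inr))))) =
      ∑ qJ' : J → F, (rnorm F (Fintype.card J) * rnorm F (Fintype.card J) *
            (starRingEnd ℂ) (ψ qJ) * φ qJ') *
          ∑ x : (I ⊕ L) → F,
            tau (combine (x ∘ Sum.inl) qJ (x ∘ Sum.inr)) *
              (starRingEnd ℂ) (tau (combine (x ∘ Sum.inl) qJ' (x ∘ Sum.inr))) := by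
    intro qJ
    rw [Finset.sum_comm]
    exact Finset.sum_congr rfl fun qJ' _ => (Finset.mul_sum _ _ _).symm
  simp only [swap2, key_sum hε hΛ htau]
  simp only [mul_ite, mul_zero, Finset.sum_ite_eq', Finset.mem_univ, if_true]
  rw [Finset.mul_sum, Finset.mul_sum]
  apply Finset.sum_congr rfl
  intro qJ _
  have hrr : rnorm F (Fintype.card J) * rnorm F (Fintype.card J) =
      ((Fintype.card F : ℂ) ^ (Fintype.card J))⁻¹ := by
    rw [rnorm_mul, ← two_mul, rnorm_two]
  have hdne : ((Fintype.card F : ℂ) ^ (Fintype.card (I ⊕ L))) ≠ 0 :=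
    pow_ne_zero _ (Nat.cast_ne_zero.mpr Fintype.card_ne_zero)
  field_simp [hrr]
  have hdJ : ((Fintype.card F : ℂ) ^ (Fintype.card J)) ≠ 0 :=
    pow_ne_zero _ (Nat.cast_ne_zero.mpr Fintype.card_ne_zero)
  rw [pow_two, hrr]
  field_simp
end Part1
section Part2
open Matrix

variable {F : Type*} [Field F] [Fintype F] [DecidableEq F] {ε : F → ℂ}
variable {I J L : Type*} [Fintype I] [Fintype J] [Fintype L]
  [DecidableEq I] [DecidableEq J] [DecidableEq L]
variable {Λ : Matrix (I ⊕ J ⊕ L) (I ⊕ J ⊕ L) F} {tau : ((I ⊕ J ⊕ L) → F) → ℂ}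

lemma cardJ_eq (hΛ : Admissible Λ) :
    Fintype.card J = Fintype.card I + Fintype.card L := by
  obtain ⟨-, ⟨B, hAB, hBA⟩, -⟩ := hΛ
  let e : ((I ⊕ L) → F) ≃ₗ[F] (J → F) :=
    LinearEquiv.ofLinear (Matrix.toLin' (blockJIL Λ)) (Matrix.toLin' B)
      (by rw [← Matrix.toLin'_mul, hAB, Matrix.toLin'_one])
      (by rw [← Matrix.toLin'_mul, hBA, Matrix.toLin'_one])
  have h := e.finrank_eq
  rw [Module.finrank_fintype_fun_eq_card, Module.finrank_fintype_fun_eq_card,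
    Fintype.card_sum] at h
  omega

lemma hinner_self_eq_zero {K : Type*} [Fintype K] [DecidableEq K]
    {ψ : HS F K} (h : hinner ψ ψ = 0) : ψ = 0 := by
  unfold hinner at h
  have hd : ((Fintype.card F : ℂ) ^ (Fintype.card K))⁻¹ ≠ 0 :=
    inv_ne_zero (pow_ne_zero _ (Nat.cast_ne_zero.mpr Fintype.card_ne_zero))
  have hsum : ∑ q : K → F, (starRingEnd ℂ) (ψ q) * ψ q = 0 :=
    (mul_eq_zero.mp h).resolve_left hd
  have hsq : ∑ q : K → F, (Complex.normSq (ψ q) : ℝ) = 0 := by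
    have : ((∑ q : K → F, (Complex.normSq (ψ q) : ℝ) : ℝ) : ℂ) = 0 := by
      push_cast
      rw [← hsum]
      exact Finset.sum_congr rfl fun q _ => by
        rw [Complex.normSq_eq_conj_mul_self]
    exact_mod_cast this
  funext q
  have := (Finset.sum_eq_zero_iff_of_nonneg
    (fun q _ => Complex.normSq_nonneg (ψ q))).mp hsq q (Finset.mem_univ q)
  exact Complex.normSq_eq_zero.mp this

lemma uMinus_surjective (hε : IsCharacter ε) (hΛ : Admissible Λ) (htau : IsTau ε Λ tau) :
    Function.Surjective (uMinusOp (I := I) (L := L) tau) := by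
  classical
  obtain ⟨B, hAB, hBA⟩ := hΛ.2.1
  have hinj : Function.Injective (uMinusOp (I := I) (L := L) tau) := by
    intro ψ φ h
    have h0 : uMinusOp (I := I) (L := L) tau (ψ - φ) = 0 := by
      rw [map_sub, h, sub_self]
    have h1 : hinner (ψ - φ) (ψ - φ) = 0 := by
      rw [← uMinus_isometry hε hΛ htau, h0]
      unfold hinner
      simp
    exact sub_eq_zero.mp (hinner_self_eq_zero h1)
  set σ : ((I ⊕ L) → F) ≃ (J → F) :=
    { toFun := (blockJIL Λ).mulVec
      invFun := B.mulVec
      left_inv := fun v => by rw [Matrix.mulVec_mulVec, hBA, Matrix.one_mulVec]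
      right_inv := fun v => by rw [Matrix.mulVec_mulVec, hAB, Matrix.one_mulVec] } with hσ
  let e : HS F J ≃ₗ[ℂ] HS F (I ⊕ L) :=
    { toFun := fun ψ => fun v => ψ (σ v)
      map_add' := fun _ _ => rfl
      map_smul' := fun _ _ => rfl
      invFun := fun φ => fun w => φ (σ.symm w)
      left_inv := fun ψ => by funext w; simp
      right_inv := fun φ => by funext v; simp }
  let f : HS F (I ⊕ L) →ₗ[ℂ] HS F (I ⊕ L) :=
    (uMinusOp (I := I) (L := L) tau) ∘ₗ e.symm.toLinearMap
  have hfinj : Function.Injective f := by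
    intro x y hxy
    exact e.symm.injective (hinj hxy)
  have hfsurj : Function.Surjective f := LinearMap.injective_iff_surjective.mp hfinj
  intro y
  obtain ⟨x, hx⟩ := hfsurj y
  exact ⟨e.symm x, hx⟩

end Part2
section AdjHelpers
open Matrix

variable {F : Type*} [Field F] [Fintype F] [DecidableEq F] {ε : F → ℂ}
variable {I J L : Type*} [Fintype I] [Fintype J] [Fintype L]
  [DecidableEq I] [DecidableEq J] [DecidableEq L]
variable {Λ : Matrix (I ⊕ J ⊕ L) (I ⊕ J ⊕ L) F} {tau : ((I ⊕ J ⊕ L) → F) → ℂ}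

lemma sum_elim_split {M : Type*} [AddCommMonoid M] (f : ((I ⊕ L) → F) → M) :
    ∑ b : (I ⊕ L) → F, f b = ∑ x : I → F, ∑ y : L → F, f (Sum.elim x y) := by
  rw [← Equiv.sum_comp (Equiv.sumArrowEquivProdArrow I L F).symm f, Fintype.sum_prod_type]
  rfl

lemma elim_eq_iff {x : I → F} {y : L → F} {a : (I ⊕ L) → F} :
    Sum.elim x y = a ↔ x = a ∘ Sum.inl ∧ y = a ∘ Sum.inr := by
  constructor
  · intro h
    constructor
    · funext i; exact congrFun h (Sum.inl i)
    · funext l; exact congrFun h (Sum.inr l)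
  · rintro ⟨h1, h2⟩
    funext v; rcases v with i | l
    · exact congrFun h1 i
    · exact congrFun h2 l

lemma hAdj_shift_apply {K : Type*} [Fintype K] [DecidableEq K]
    (e : K → F) (φ : HS F K) (a : K → F) :
    hAdj (shiftOp e) φ a = φ (a + e) := by
  unfold hAdj
  rw [kernelMap_apply]
  have hterm : ∀ b : K → F,
      (Fintype.card F : ℂ) ^ (Fintype.card K) * ((Fintype.card F : ℂ) ^ (Fintype.card K))⁻¹ *
        (starRingEnd ℂ) (shiftOp e (deltaV a) b) * φ b =
      if b = a + e then φ b else 0 := by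
    intro b
    have hd : ((Fintype.card F : ℂ) ^ (Fintype.card K)) ≠ 0 :=
      pow_ne_zero _ (Nat.cast_ne_zero.mpr Fintype.card_ne_zero)
    have h1 : shiftOp e (deltaV a) b = if b = a + e then 1 else 0 := by
      show deltaV a (b - e) = _
      unfold deltaV
      congr 1
      simp [sub_eq_iff_eq_add]
    rw [h1, mul_inv_cancel₀ hd]
    by_cases h : b = a + e <;> simp [h]
  simp only [hterm]
  simp [Finset.sum_ite_eq']

lemma hAdj_tens_apply (φ : HS F (I ⊕ L)) (qI : I → F) :
    hAdj (tensOmega (M := I) (K := L)) φ qI =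
      (Fintype.card F : ℂ) ^ (Fintype.card I) *
        ((Fintype.card F : ℂ) ^ (Fintype.card (I ⊕ L)))⁻¹ *
          ∑ aL : L → F, φ (Sum.elim qI aL) := by
  unfold hAdj
  rw [kernelMap_apply, sum_elim_split (f := fun b => _ * φ b)]
  have hx : ∀ (x : I → F) (y : L → F),
      (Fintype.card F : ℂ) ^ (Fintype.card I) *
          ((Fintype.card F : ℂ) ^ (Fintype.card (I ⊕ L)))⁻¹ *
        (starRingEnd ℂ) (tensOmega (M := I) (K := L) (deltaV qI) (Sum.elim x y)) *
          φ (Sum.elim x y) =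
      if x = qI then
        (Fintype.card F : ℂ) ^ (Fintype.card I) *
          ((Fintype.card F : ℂ) ^ (Fintype.card (I ⊕ L)))⁻¹ * φ (Sum.elim x y)
      else 0 := by
    intro x y
    have h1 : tensOmega (M := I) (K := L) (deltaV qI) (Sum.elim x y) =
        if x = qI then 1 else 0 := by
      show deltaV qI ((Sum.elim x y) ∘ Sum.inl) = _
      unfold deltaV
      rfl
    rw [h1]
    by_cases h : x = qI <;> simp [h]
  simp only [hx]
  have hy : ∀ x : I → F,
      (∑ y : L → F, if x = qI then
        (Fintype.card F : ℂ) ^ (Fintype.card I) *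
          ((Fintype.card F : ℂ) ^ (Fintype.card (I ⊕ L)))⁻¹ * φ (Sum.elim x y)
      else 0) =
      if x = qI then
        (Fintype.card F : ℂ) ^ (Fintype.card I) *
          ((Fintype.card F : ℂ) ^ (Fintype.card (I ⊕ L)))⁻¹ *
            ∑ y : L → F, φ (Sum.elim x y)
      else 0 := by
    intro x
    split
    · rw [Finset.mul_sum]
    · simp
  simp only [hy]
  simp [Finset.sum_ite_eq']

end AdjHelpers
section AdjHelpers2
open Matrix

variable {F : Type*} [Field F] [Fintype F] [DecidableEq F] {ε : F → ℂ}
variable {I J L : Type*} [Fintype I] [Fintype J] [Fintype L]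
  [DecidableEq I] [DecidableEq J] [DecidableEq L]
variable {Λ : Matrix (I ⊕ J ⊕ L) (I ⊕ J ⊕ L) F} {tau : ((I ⊕ J ⊕ L) → F) → ℂ}

lemma fourier_delta (hε : IsCharacter ε) (a b : (I ⊕ L) → F) :
    fourierR ε (M := I) (K := L) (deltaV a) b =
      if b ∘ Sum.inl = a ∘ Sum.inl then
        rnorm F (Fintype.card L) * chi ε (b ∘ Sum.inr) (a ∘ Sum.inr)
      else 0 := by
  show (∑ qK' : L → F, rnorm F (Fintype.card L) * chi ε (b ∘ Sum.inr) qK' *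
      deltaV a (Sum.elim (b ∘ Sum.inl) qK')) = _
  have hterm : ∀ qK' : L → F,
      rnorm F (Fintype.card L) * chi ε (b ∘ Sum.inr) qK' *
        deltaV a (Sum.elim (b ∘ Sum.inl) qK') =
      if qK' = a ∘ Sum.inr then
        (if b ∘ Sum.inl = a ∘ Sum.inl then
          rnorm F (Fintype.card L) * chi ε (b ∘ Sum.inr) (a ∘ Sum.inr) else 0)
      else 0 := by
    intro qK'
    unfold deltaV
    by_cases h1 : qK' = a ∘ Sum.inr <;> by_cases h2 : b ∘ Sum.inl = a ∘ Sum.inl <;>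
      simp [h1, h2, elim_eq_iff]
  simp only [hterm]
  simp [Finset.sum_ite_eq']

lemma hAdj_fourier_apply (hε : IsCharacter ε) (φ : HS F (I ⊕ L)) (a : (I ⊕ L) → F) :
    hAdj (fourierR ε (M := I) (K := L)) φ a =
      ∑ pL : L → F, rnorm F (Fintype.card L) * chi ε (-pL) (a ∘ Sum.inr) *
        φ (Sum.elim (a ∘ Sum.inl) pL) := by
  unfold hAdj
  rw [kernelMap_apply, sum_elim_split (f := fun b => _ * φ b)]
  have hC : (Fintype.card F : ℂ) ^ (Fintype.card (I ⊕ L)) *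
      ((Fintype.card F : ℂ) ^ (Fintype.card (I ⊕ L)))⁻¹ = 1 :=
    mul_inv_cancel₀ (pow_ne_zero _ (Nat.cast_ne_zero.mpr Fintype.card_ne_zero))
  have hterm : ∀ (x : I → F) (y : L → F),
      (Fintype.card F : ℂ) ^ (Fintype.card (I ⊕ L)) *
          ((Fintype.card F : ℂ) ^ (Fintype.card (I ⊕ L)))⁻¹ *
        (starRingEnd ℂ) (fourierR ε (M := I) (K := L) (deltaV a) (Sum.elim x y)) *
          φ (Sum.elim x y) =
      if x = a ∘ Sum.inl then
        rnorm F (Fintype.card L) * chi ε (-y) (a ∘ Sum.inr) * φ (Sum.elim x y)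
      else 0 := by
    intro x y
    rw [fourier_delta hε, hC, one_mul]
    have hxl : (Sum.elim x y) ∘ Sum.inl = x := rfl
    have hyr : (Sum.elim x y) ∘ Sum.inr = y := rfl
    rw [hxl, hyr]
    by_cases h : x = a ∘ Sum.inl
    · rw [if_pos h, if_pos h, _root_.map_mul, rnorm_conj, chi_conj hε]
    · rw [if_neg h, if_neg h, map_zero, zero_mul]
  simp only [hterm]
  have hy : ∀ x : I → F,
      (∑ y : L → F, if x = a ∘ Sum.inl then
        rnorm F (Fintype.card L) * chi ε (-y) (a ∘ Sum.inr) * φ (Sum.elim x y)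
      else 0) =
      if x = a ∘ Sum.inl then
        ∑ y : L → F, rnorm F (Fintype.card L) * chi ε (-y) (a ∘ Sum.inr) *
          φ (Sum.elim x y)
      else 0 := by
    intro x
    split <;> simp
  simp only [hy]
  simp [Finset.sum_ite_eq']

lemma hAdj_gcode_apply (qL : L → F) (ψ : HS F J) (qI : I → F) :
    hAdj (gcode tau qL) ψ qI =
      (Fintype.card F : ℂ) ^ (Fintype.card I) *
        ((Fintype.card F : ℂ) ^ (Fintype.card J))⁻¹ * rnorm F (Fintype.card I) *
          ∑ qJ : J → F, (starRingEnd ℂ) (tau (combine qI qJ qL)) * ψ qJ := by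
  unfold hAdj
  rw [kernelMap_apply]
  have hdelta : ∀ qJ : J → F, gcode tau qL (deltaV qI) qJ =
      rnorm F (Fintype.card I) * tau (combine qI qJ qL) := by
    intro qJ
    show (∑ qI' : I → F, rnorm F (Fintype.card I) * tau (combine qI' qJ qL) *
      deltaV qI qI') = _
    unfold deltaV
    simp [Finset.sum_ite_eq']
  simp only [hdelta]
  rw [Finset.mul_sum]
  exact Finset.sum_congr rfl fun qJ _ => by
    rw [_root_.map_mul, rnorm_conj]; ring
end AdjHelpers2
section Part3
open Matrix

variable {F : Type*} [Field F] [Fintype F] [DecidableEq F] {ε : F → ℂ}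
variable {I J L : Type*} [Fintype I] [Fintype J] [Fintype L]
  [DecidableEq I] [DecidableEq J] [DecidableEq L]
variable {Λ : Matrix (I ⊕ J ⊕ L) (I ⊕ J ⊕ L) F} {tau : ((I ⊕ J ⊕ L) → F) → ℂ}

lemma tau_split (hε : IsCharacter ε) (hΛ : Admissible Λ) (htau : IsTau ε Λ tau)
    (qI : I → F) (qJ : J → F) (qL pL : L → F) :
    tau (combine qI qJ (pL + qL)) =
      tau (combine qI qJ qL) * tau (combine 0 0 pL) *
        chi ε (fun l => ∑ j, Λ (inL l) (inJ j) * qJ j) pL := by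
  obtain ⟨-, -, hzero⟩ := hΛ
  have hcomb : combine qI qJ qL + combine (0 : I → F) (0 : J → F) pL =
      combine qI qJ (pL + qL) := by
    rw [combine_add, add_zero, add_zero, add_comm]
  rw [← hcomb, htau.2, chi_combine_right hε]
  congr 2
  funext l
  rw [mulVec_combine]
  have hI0 : (∑ i, Λ (inL l) (inI i) * qI i) = 0 :=
    Finset.sum_eq_zero fun i _ => by
      rw [show Λ (inL l) (inI i) = 0 from hzero (Sum.inr l) (Sum.inl i), zero_mul]
  have hL0 : (∑ l', Λ (inL l) (inL l') * qL l') = 0 :=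
    Finset.sum_eq_zero fun l' _ => by
      rw [show Λ (inL l) (inL l') = 0 from hzero (Sum.inr l) (Sum.inr l'), zero_mul]
  rw [hI0, hL0, zero_add, add_zero]

lemma part3 (hε : IsCharacter ε) (hΛ : Admissible Λ) (htau : IsTau ε Λ tau)
    (qL : L → F) :
    hAdj (tensOmega (M := I) (K := L)) ∘ₗ hAdj (fourierR ε (M := I) (K := L)) ∘ₗ
        hAdj (shiftOp (Sum.elim (0 : I → F) qL)) ∘ₗ uMinusOp tau
      = (1 : ℂ) • hAdj (gcode tau qL) := by
  apply LinearMap.ext; intro ψ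
  funext qI
  rw [LinearMap.smul_apply, LinearMap.comp_apply, LinearMap.comp_apply,
    LinearMap.comp_apply, one_smul]
  rw [hAdj_tens_apply, hAdj_gcode_apply]
  have hA : ∀ aL : L → F,
      hAdj (fourierR ε (M := I) (K := L))
        (hAdj (shiftOp (Sum.elim (0 : I → F) qL)) (uMinusOp tau ψ)) (Sum.elim qI aL) =
      ∑ pL : L → F, rnorm F (Fintype.card L) * chi ε (-pL) aL *
        ∑ qJ : J → F, (rnorm F (Fintype.card J) *
          ((starRingEnd ℂ) (tau (combine qI qJ qL)) *
            (starRingEnd ℂ) (tau (combine (0 : I → F) (0 : J → F) pL)) *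
              chi ε (-(fun l => ∑ j, Λ (inL l) (inJ j) * qJ j)) pL)) * ψ qJ := by
    intro aL
    rw [hAdj_fourier_apply hε]
    simp only [Sum.elim_comp_inl, Sum.elim_comp_inr]
    apply Finset.sum_congr rfl; intro pL _
    congr 1
    rw [hAdj_shift_apply]
    have he : Sum.elim qI pL + Sum.elim (0 : I → F) qL = Sum.elim qI (pL + qL) := by
      funext v
      rcases v with i | l
      · exact add_zero (qI i)
      · rfl
    rw [he]
    rw [show uMinusOp (I := I) (L := L) tau ψ (Sum.elim qI (pL + qL)) =
      ∑ qJ : J → F, (rnorm F (Fintype.card J) *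
        (starRingEnd ℂ) (tau (combine qI qJ (pL + qL)))) * ψ qJ from rfl]
    apply Finset.sum_congr rfl; intro qJ _
    rw [tau_split hε hΛ htau, _root_.map_mul, _root_.map_mul, chi_conj hε]
  simp only [hA]
  rw [Finset.sum_comm]
  have hB : ∀ pL : L → F,
      (∑ aL : L → F, rnorm F (Fintype.card L) * chi ε (-pL) aL *
        ∑ qJ : J → F, (rnorm F (Fintype.card J) *
          ((starRingEnd ℂ) (tau (combine qI qJ qL)) *
            (starRingEnd ℂ) (tau (combine (0 : I → F) (0 : J → F) pL)) *
              chi ε (-(fun l => ∑ j, Λ (inL l) (inJ j) * qJ j)) pL)) * ψ qJ) =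
      (∑ aL : L → F, chi ε (-pL) aL) *
        (rnorm F (Fintype.card L) *
          ∑ qJ : J → F, (rnorm F (Fintype.card J) *
            ((starRingEnd ℂ) (tau (combine qI qJ qL)) *
              (starRingEnd ℂ) (tau (combine (0 : I → F) (0 : J → F) pL)) *
                chi ε (-(fun l => ∑ j, Λ (inL l) (inJ j) * qJ j)) pL)) * ψ qJ) := by
    intro pL
    rw [Finset.sum_mul]
    exact Finset.sum_congr rfl fun aL _ => by ring
  simp only [hB, sum_chi hε, neg_eq_zero]
  simp only [ite_mul, zero_mul, Finset.sum_ite_eq', Finset.mem_univ, if_true]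
  rw [combine_zero, tau_zero hε htau, _root_.map_one]
  have hG : ∀ qJ : J → F,
      (rnorm F (Fintype.card J) *
        ((starRingEnd ℂ) (tau (combine qI qJ qL)) * 1 *
          chi ε (-(fun l => ∑ j, Λ (inL l) (inJ j) * qJ j)) 0)) * ψ qJ =
      rnorm F (Fintype.card J) * ((starRingEnd ℂ) (tau (combine qI qJ qL)) * ψ qJ) := by
    intro qJ
    rw [chi_zero_right hε]
    ring
  simp only [hG]
  rw [← Finset.mul_sum]
  -- constants
  have hcard := cardJ_eq (I := I) (J := J) (L := L) hΛ
  have h3 : rnorm F (Fintype.card L) * rnorm F (Fintype.card L) =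
      ((Fintype.card F : ℂ) ^ (Fintype.card L))⁻¹ := by
    rw [rnorm_mul, ← two_mul, rnorm_two]
  have hrJ : rnorm F (Fintype.card J) =
      rnorm F (Fintype.card I) * rnorm F (Fintype.card L) := by
    rw [rnorm_mul, ← hcard]
  have hdI : ((Fintype.card F : ℂ) ^ (Fintype.card I)) ≠ 0 :=
    pow_ne_zero _ (Nat.cast_ne_zero.mpr Fintype.card_ne_zero)
  have hdL : ((Fintype.card F : ℂ) ^ (Fintype.card L)) ≠ 0 :=
    pow_ne_zero _ (Nat.cast_ne_zero.mpr Fintype.card_ne_zero)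
  rw [hrJ, Fintype.card_sum, hcard, pow_add]
  have key : rnorm F (Fintype.card L) *
      (rnorm F (Fintype.card I) * rnorm F (Fintype.card L)) *
      (Fintype.card F : ℂ) ^ (Fintype.card L) = rnorm F (Fintype.card I) := by
    calc rnorm F (Fintype.card L) * (rnorm F (Fintype.card I) * rnorm F (Fintype.card L)) *
          (Fintype.card F : ℂ) ^ (Fintype.card L)
        = (rnorm F (Fintype.card L) * rnorm F (Fintype.card L)) *
            (Fintype.card F : ℂ) ^ (Fintype.card L) * rnorm F (Fintype.card I) := by ring
      _ = rnorm F (Fintype.card I) := by rw [h3, inv_mul_cancel₀ hdL, one_mul]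
  linear_combination (((Fintype.card F : ℂ) ^ (Fintype.card I) *
    ((Fintype.card F : ℂ) ^ (Fintype.card I) * (Fintype.card F : ℂ) ^ (Fintype.card L))⁻¹) *
    (∑ qJ : J → F, (starRingEnd ℂ) (tau (combine qI qJ qL)) * ψ qJ)) * key

end Part3
/-- For an admissible graph `Λ`, the operator `u_{[-Λ,J]}` is
unitary, and for every `q^L` there is a unimodular `λ` with
`Φ_L^* F_L^* x_L(q^L)^* u_{[-Λ,J]} = λ · v_{[Λ,q^L]}^*`. -/
theorem uMinus_unitary_implements_coisometries
    {F : Type*} [Field F] [Fintype F] [DecidableEq F]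
    {I J L : Type*} [Fintype I] [Fintype J] [Fintype L]
    [DecidableEq I] [DecidableEq J] [DecidableEq L]
    (ε : F → ℂ) (hε : IsCharacter ε)
    (Λ : Matrix (I ⊕ J ⊕ L) (I ⊕ J ⊕ L) F) (hΛ : Admissible Λ)
    (tau : ((I ⊕ J ⊕ L) → F) → ℂ) (htau : IsTau ε Λ tau) :
    (∀ (ψ φ : HS F J),
      hinner (uMinusOp (I := I) (L := L) tau ψ) (uMinusOp tau φ) = hinner ψ φ) ∧
    Function.Surjective (uMinusOp (I := I) (L := L) tau) ∧
    ∀ qL : L → F, ∃ lam : ℂ, ‖lam‖ = 1 ∧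
      hAdj (tensOmega (M := I) (K := L)) ∘ₗ hAdj (fourierR ε (M := I) (K := L)) ∘ₗ
          hAdj (shiftOp (Sum.elim (0 : I → F) qL)) ∘ₗ uMinusOp tau
        = lam • hAdj (gcode tau qL) := by
  exact ⟨uMinus_isometry hε hΛ htau, uMinus_surjective hε hΛ htau,
    fun qL => ⟨1, by simp, part3 hε hΛ htau qL⟩⟩
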